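/- For FI-modules over a commutative ring $k$ (case $m=1$): let $V$ be an FI-module generated by its value $V_n$ on $[n]$, and suppose $H_1(V) = 0$ where $H_1(V) = \mathrm{Tor}_1^{k\mathrm{FI}}(k\mathrm{FI}/\mathfrak{m}, V)$. Then the canonical surjection $M(n) \otimes_{kS_n} V_n \to V$ is an isomorphism, i.e., $V$ is a basic relative projective module. -/

import Mathlib

open CategoryTheory CategoryTheory.Limits TensorProduct

/-- The skeletal category `FI`: objects are natural numbers, morphisms injections. -/
structure FI : Type where
  n : ℕ

instance : Category FI where
  Hom a b := Fin a.n ↪ Fin b.n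
  id a := Function.Embedding.refl _
  comp f g := f.trans g
  id_comp := by intros; rfl
  comp_id := by intros; rfl
  assoc := by intros; rfl

section H0

variable (k : Type) [CommRing k] (l : FI)

/-- The value `(𝔪 V)_l ⊆ V_l`: the submodule generated by the images of all maps
`V_t → V_l` induced by morphisms `t ⟶ l` with `t ≠ l`. -/
def mSub (V : FI ⥤ ModuleCat k) : Submodule k (V.obj l) :=
  ⨆ (t : FI) (_ : t ≠ l) (f : t ⟶ l), LinearMap.range (V.map f).hom

lemma mSub_le {V W : FI ⥤ ModuleCat k} (α : V ⟶ W) :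
    mSub k l V ≤ (mSub k l W).comap (α.app l).hom := by
  refine iSup_le fun t => iSup_le fun ht => iSup_le fun f => ?_
  rintro x ⟨y, rfl⟩
  have h := congrArg (fun (g : V.obj t ⟶ W.obj l) => g y) (α.naturality f)
  try simp only [ConcreteCategory.comp_apply] at h
  have hle : LinearMap.range (W.map f).hom ≤ mSub k l W :=
    le_iSup_of_le t (le_iSup_of_le ht (le_iSup (fun f : t ⟶ l => LinearMap.range (W.map f).hom) f))
  exact hle ⟨α.app t y, h.symm⟩

/-- The functor `V ↦ H_0(V)_l = V_l / (𝔪 V)_l` from `FI`-modules to `k`-modules.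
Its left derived functors compute the `FI`-homology `H_s(V)_l = Tor_s^{kFI}(kFI/𝔪, V)_l`. -/
noncomputable def H0 : (FI ⥤ ModuleCat k) ⥤ ModuleCat k where
  obj V := ModuleCat.of k (V.obj l ⧸ mSub k l V)
  map {V W} α := ModuleCat.ofHom ((mSub k l V).mapQ (mSub k l W) (α.app l).hom (mSub_le k l α))
  map_id := fun V => ModuleCat.hom_ext (Submodule.linearMap_qext _ (by ext x; rfl))
  map_comp := fun α β => ModuleCat.hom_ext (Submodule.linearMap_qext _ (by ext x; rfl))

instance : (H0 k l).Additive where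
  map_add := by
    intro V W α β
    exact ModuleCat.hom_ext (Submodule.linearMap_qext _ (by ext x; rfl))

end H0

section RelProj

/-- The free `k`-module on the set of injections `[n] ↪ [l]`, i.e. `M(n)_l`. -/
def FreeMod (k : Type) [CommRing k] (n l : ℕ) : Type := (Fin n ↪ Fin l) →₀ k

noncomputable instance (k : Type) [CommRing k] (n l : ℕ) : AddCommGroup (FreeMod k n l) :=
  Finsupp.instAddCommGroup

noncomputable instance (k : Type) [CommRing k] (n l : ℕ) : Module k (FreeMod k n l) :=
  Finsupp.module _ _

/-- The basis element of `M(n)_l` corresponding to an injection `g : [n] ↪ [l]`. -/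
noncomputable def bas (k : Type) [CommRing k] (n l : ℕ) (g : Fin n ↪ Fin l) :
    FreeMod k n l :=
  Finsupp.single g (1 : k)

variable (k : Type) [CommRing k] (n : ℕ)
variable (W : Type) [AddCommGroup W] [Module k W]
  [DistribMulAction (Equiv.Perm (Fin n)) W] [SMulCommClass (Equiv.Perm (Fin n)) k W]

/-- The relations defining `M(n) ⊗_{kS_n} W` as a quotient of `M(n)_l ⊗_k W`. -/
def relSet (l : ℕ) : Set ((FreeMod k n l) ⊗[k] W) :=
  {x | ∃ (g : Fin n ↪ Fin l) (σ : Equiv.Perm (Fin n)) (w : W),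
    x = bas k n l (σ.toEmbedding.trans g) ⊗ₜ[k] w - bas k n l g ⊗ₜ[k] (σ • w)}

/-- The value at `[l]` of the basic relative projective `FI`-module `M(n) ⊗_{kS_n} W`. -/
def TT (l : ℕ) : Type :=
  ((FreeMod k n l) ⊗[k] W) ⧸ Submodule.span k (relSet k n W l)

noncomputable instance (l : ℕ) : AddCommGroup (TT k n W l) :=
  Submodule.Quotient.addCommGroup _

noncomputable instance (l : ℕ) : Module k (TT k n W l) :=
  Submodule.Quotient.module _

/-- The class of `g ⊗ w` in `(M(n) ⊗_{kS_n} W)_l`. -/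
noncomputable def cls (l : ℕ) (g : Fin n ↪ Fin l) (w : W) : TT k n W l :=
  Submodule.Quotient.mk (bas k n l g ⊗ₜ[k] w)

end RelProj

set_option linter.unusedSectionVars false

section TTAux

variable (k : Type) [CommRing k] (n : ℕ)
variable (W : Type) [AddCommGroup W] [Module k W]
  [DistribMulAction (Equiv.Perm (Fin n)) W] [SMulCommClass (Equiv.Perm (Fin n)) k W]

/-- The map `M(n)_t → M(n)_l` induced by `f : [t] ↪ [l]`. -/
noncomputable def mapFree {t l : ℕ} (f : Fin t ↪ Fin l) :
    FreeMod k n t →ₗ[k] FreeMod k n l :=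
  Finsupp.lmapDomain k k (fun g => g.trans f)

lemma mapFree_bas {t l : ℕ} (f : Fin t ↪ Fin l) (g : Fin n ↪ Fin t) :
    mapFree k n f (bas k n t g) = bas k n l (g.trans f) := by
  show Finsupp.lmapDomain k k (fun g : Fin n ↪ Fin t => g.trans f) (Finsupp.single g 1)
    = Finsupp.single (g.trans f) (1:k)
  rw [Finsupp.lmapDomain_apply, Finsupp.mapDomain_single]

/-- The map `(M(n) ⊗ W)_t → (M(n) ⊗ W)_l` before taking quotients. -/
noncomputable def mapTens {t l : ℕ} (f : Fin t ↪ Fin l) :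
    (FreeMod k n t ⊗[k] W) →ₗ[k] (FreeMod k n l ⊗[k] W) :=
  LinearMap.rTensor W (mapFree k n f)

lemma mapTens_tmul {t l : ℕ} (f : Fin t ↪ Fin l) (g : Fin n ↪ Fin t) (w : W) :
    mapTens k n W f (bas k n t g ⊗ₜ[k] w) = bas k n l (g.trans f) ⊗ₜ[k] w := by
  simp [mapTens, mapFree_bas]

lemma trans_assoc' {a b c d : ℕ} (u : Fin a ↪ Fin b) (v : Fin b ↪ Fin c) (w : Fin c ↪ Fin d) :
    (u.trans v).trans w = u.trans (v.trans w) := rfl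

lemma span_rel_le {t l : ℕ} (f : Fin t ↪ Fin l) :
    Submodule.span k (relSet k n W t) ≤
      (Submodule.span k (relSet k n W l)).comap (mapTens k n W f) := by
  rw [Submodule.span_le]
  rintro x ⟨g, σ, w, rfl⟩
  simp only [SetLike.mem_coe, Submodule.mem_comap, map_sub, mapTens_tmul, trans_assoc']
  exact Submodule.subset_span ⟨g.trans f, σ, w, rfl⟩

/-- The structure map `(M(n) ⊗ W)_t → (M(n) ⊗ W)_l` of the relative projective. -/
noncomputable def TTmap {t l : ℕ} (f : Fin t ↪ Fin l) : TT k n W t →ₗ[k] TT k n W l :=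
  Submodule.mapQ _ _ (mapTens k n W f) (span_rel_le k n W f)

lemma TTmap_cls {t l : ℕ} (f : Fin t ↪ Fin l) (g : Fin n ↪ Fin t) (w : W) :
    TTmap k n W f (cls k n W t g w) = cls k n W l (g.trans f) w := by
  show Submodule.mapQ _ _ _ _ (Submodule.Quotient.mk _) = _
  rw [Submodule.mapQ_apply, mapTens_tmul]
  rfl

lemma cls_rel (l : ℕ) (g : Fin n ↪ Fin l) (σ : Equiv.Perm (Fin n)) (w : W) :
    cls k n W l (σ.toEmbedding.trans g) w = cls k n W l g (σ • w) := by
  rw [cls, cls]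
  exact (Submodule.Quotient.eq _).2 (Submodule.subset_span ⟨g, σ, w, rfl⟩)

lemma single_tmul_eq_smul (l : ℕ) (g : Fin n ↪ Fin l) (a : k) (w : W) :
    ((Finsupp.single g a : FreeMod k n l) ⊗ₜ[k] w : FreeMod k n l ⊗[k] W)
      = a • (bas k n l g ⊗ₜ[k] w) := by
  have h1 : (Finsupp.single g a : FreeMod k n l) = a • Finsupp.single g (1:k) := by
    rw [Finsupp.smul_single, smul_eq_mul, mul_one]
  rw [bas, h1]
  exact (smul_tmul' a (Finsupp.single g (1:k) : FreeMod k n l) w).symm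

/-- Two linear maps out of `TT` agree if they agree on the classes `cls g w`. -/
lemma TT_ext {l : ℕ} {M : Type} [AddCommGroup M] [Module k M] {A B : TT k n W l →ₗ[k] M}
    (h : ∀ (g : Fin n ↪ Fin l) (w : W), A (cls k n W l g w) = B (cls k n W l g w)) : A = B := by
  apply Submodule.linearMap_qext
  apply TensorProduct.ext'
  intro x w
  induction x using Finsupp.induction_linear with
  | zero =>
    exact ((congrArg (A ∘ₗ _) (zero_tmul (R := k) (M := FreeMod k n l) w)).trans (map_zero _)).trans
      ((congrArg (B ∘ₗ _) (zero_tmul (R := k) (M := FreeMod k n l) w)).trans (map_zero _)).symm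
  | add a b ha hb =>
    exact ((congrArg (A ∘ₗ _) (add_tmul (R := k) (M := FreeMod k n l) a b w)).trans (map_add _ _ _)).trans
      ((congrArg₂ (· + ·) ha hb).trans
        ((congrArg (B ∘ₗ _) (add_tmul (R := k) (M := FreeMod k n l) a b w)).trans (map_add _ _ _)).symm)
  | single g a =>
    rw [single_tmul_eq_smul, map_smul, map_smul]
    exact congrArg (a • ·) (h g w)

lemma cls_span (l : ℕ) (x : TT k n W l) :
    x ∈ Submodule.span k {y | ∃ (g : Fin n ↪ Fin l) (w : W), y = cls k n W l g w} := by
  obtain ⟨z, rfl⟩ := Submodule.Quotient.mk_surjective _ x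
  induction z using TensorProduct.induction_on with
  | zero => exact Submodule.zero_mem _
  | add a b ha hb => rw [Submodule.Quotient.mk_add]; exact Submodule.add_mem _ ha hb
  | tmul a w =>
    induction a using Finsupp.induction_linear with
    | zero =>
      have E := (congrArg (Submodule.Quotient.mk (p := Submodule.span k (relSet k n W l))) (zero_tmul (R := k) (M := FreeMod k n l) w)).trans
        (Submodule.Quotient.mk_zero _)
      exact (congrArg (fun z : TT k n W l => z ∈ Submodule.span k {y | ∃ (g : Fin n ↪ Fin l) (w : W), y = cls k n W l g w}) E).mpr (Submodule.zero_mem _)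
    | add a b ha hb =>
      have E := (congrArg (Submodule.Quotient.mk (p := Submodule.span k (relSet k n W l))) (add_tmul (R := k) (M := FreeMod k n l) a b w)).trans
        (Submodule.Quotient.mk_add _)
      exact (congrArg (fun z : TT k n W l => z ∈ Submodule.span k {y | ∃ (g : Fin n ↪ Fin l) (w : W), y = cls k n W l g w}) E).mpr (Submodule.add_mem _ ha hb)
    | single g c =>
      rw [single_tmul_eq_smul, Submodule.Quotient.mk_smul]
      exact Submodule.smul_mem _ _ (Submodule.subset_span ⟨g, w, rfl⟩)

lemma trans_refl' {a b : ℕ} (u : Fin a ↪ Fin b) : u.trans (Function.Embedding.refl _) = u := rfl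

lemma refl_trans' {a b : ℕ} (u : Fin a ↪ Fin b) : (Function.Embedding.refl _).trans u = u := rfl

/-- The basic relative projective `FI`-module `M(n) ⊗_{kS_n} W` as a functor. -/
noncomputable def TTfun : FI ⥤ ModuleCat k where
  obj l := ModuleCat.of k (TT k n W l.n)
  map {t l} f := ModuleCat.ofHom (TTmap k n W f)
  map_id l := ModuleCat.hom_ext (TT_ext k n W (fun g w => by
    show TTmap k n W (Function.Embedding.refl (Fin l.n)) (cls k n W l.n g w) = cls k n W l.n g w
    rw [TTmap_cls, trans_refl']))
  map_comp {a b c} f g := ModuleCat.hom_ext (TT_ext k n W (fun e w => by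
    show TTmap k n W (f.trans g) (cls k n W a.n e w)
      = TTmap k n W g (TTmap k n W f (cls k n W a.n e w))
    rw [TTmap_cls, TTmap_cls, TTmap_cls, trans_assoc']))
end TTAux

lemma H0_map_mk (k : Type) [CommRing k] (l : FI) {A B : FI ⥤ ModuleCat k} (α : A ⟶ B)
    (x : A.obj l) :
    ((H0 k l).map α).hom (Submodule.Quotient.mk x) = Submodule.Quotient.mk (α.app l x) := rfl

lemma mem_mSub (k : Type) [CommRing k] {l : FI} (A : FI ⥤ ModuleCat k) {t : FI} (ht : t ≠ l)
    (f : t ⟶ l) (y : A.obj t) : A.map f y ∈ mSub k l A :=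
  (show LinearMap.range (A.map f).hom ≤ mSub k l A from le_iSup_of_le t (le_iSup_of_le ht
    (le_iSup (fun f : t ⟶ l => LinearMap.range (A.map f).hom) f))) ⟨y, rfl⟩

lemma FI_hom_card {t l : FI} (f : t ⟶ l) : t.n ≤ l.n := by
  simpa using Fintype.card_le_of_embedding f

lemma FI_ne_lt {t l : FI} (ht : t ≠ l) (f : t ⟶ l) : t.n < l.n := by
  refine lt_of_le_of_ne (FI_hom_card f) fun h => ht ?_
  cases t; cases l; cases h; rfl

/-- (Case `m = 1`, i.e. `FI`-modules over a commutative ring `k`.)  Let `V` be an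
`FI`-module generated by its value `V_n` (the canonical map `M(n) ⊗_{kS_n} V_n → V`
is surjective), and suppose `H_1(V) = 0`, where `H_s(V) = Tor_s^{kFI}(kFI/𝔪, V)` is
computed by the left derived functors of `V ↦ V/𝔪V`.  Then the canonical surjection
`M(n) ⊗_{kS_n} V_n → V` is an isomorphism, i.e. `V` is a basic relative projective
module.  Here the `S_n`-action on `V_n` is the canonical one (`σ • v = σ · v`), and
the canonical map is encoded objectwise by the maps `Φ_l`, `g ⊗ w ↦ g · w`. -/
theorem stmt18 (k : Type) [CommRing k]
    [HasProjectiveResolutions (FI ⥤ ModuleCat k)]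
    (V : FI ⥤ ModuleCat k) (n : FI)
    [DistribMulAction (Equiv.Perm (Fin n.n)) (V.obj n)]
    [SMulCommClass (Equiv.Perm (Fin n.n)) k (V.obj n)]
    (hact : ∀ (σ : Equiv.Perm (Fin n.n)) (v : V.obj n),
      σ • v = V.map (show n ⟶ n from σ.toEmbedding) v)
    (Φ : ∀ l : FI, TT k n.n (V.obj n) l.n →ₗ[k] V.obj l)
    (hΦ : ∀ (l : FI) (g : Fin n.n ↪ Fin l.n) (w : V.obj n),
      Φ l (cls k n.n (V.obj n) l.n g w) = V.map (show n ⟶ l from g) w)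
    (hgen : ∀ l : FI, Function.Surjective (Φ l))
    (hH1 : ∀ l : FI, IsZero (((H0 k l).leftDerived 1).obj V)) :
    ∀ l : FI, Function.Bijective (Φ l) := by
  -- the relative projective as a functor
  set T : FI ⥤ ModuleCat k := TTfun k n.n (V.obj n) with hT
  -- the canonical natural transformation `T ⟶ V`
  have hnat : ∀ {t l : FI} (f : t ⟶ l) (x : TT k n.n (V.obj n) t.n),
      Φ l (TTmap k n.n (V.obj n) f x) = V.map f (Φ t x) := by
    intro t l f
    have : (Φ l).comp (TTmap k n.n (V.obj n) f) = ((V.map f).hom ∘ₗ (Φ t) : _ →ₗ[k] _) := by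
      apply TT_ext
      intro g w
      show Φ l (TTmap k n.n (V.obj n) f (cls k n.n (V.obj n) t.n g w))
        = V.map f (Φ t (cls k n.n (V.obj n) t.n g w))
      rw [TTmap_cls, hΦ, hΦ]
      rw [show (show n ⟶ l from g.trans f) = (show n ⟶ t from g) ≫ f from rfl, V.map_comp]
      rfl
    exact fun x => LinearMap.congr_fun this x
  let ΦN : T ⟶ V :=
    { app := fun l => ModuleCat.ofHom (Φ l)
      naturality := fun {t l} f => by
        apply ModuleCat.hom_ext
        apply TT_ext
        intro g w
        exact hnat f (cls k n.n (V.obj n) t.n g w) }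
  haveI : ∀ l : FI, Epi (ΦN.app l) := fun l => (ModuleCat.epi_iff_surjective _).2 (hgen l)
  haveI : Epi ΦN := NatTrans.epi_of_epi_app ΦN
  -- a projective resolution of `V`
  let P : ProjectiveResolution V := (HasProjectiveResolution.out (Z := V)).some
  set Qc : FI ⥤ ModuleCat k := P.complex.X 0 with hQc
  set P1 : FI ⥤ ModuleCat k := P.complex.X 1 with hP1
  set P2 : FI ⥤ ModuleCat k := P.complex.X 2 with hP2
  let Viso : ((ChainComplex.single₀ (FI ⥤ ModuleCat k)).obj V).X 0 ≅ V :=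
    HomologicalComplex.singleObjXSelf (ComplexShape.down ℕ) 0 V
  let π₀ : Qc ⟶ V := P.π.f 0 ≫ Viso.hom
  haveI : Epi π₀ := epi_comp _ _
  let lam : Qc ⟶ T := Projective.factorThru π₀ ΦN
  have hlam : lam ≫ ΦN = π₀ := Projective.factorThru_comp _ _
  have hlam_app : ∀ (t : FI) (q : Qc.obj t), Φ t (lam.app t q) = π₀.app t q := by
    intro t q
    have h := congrArg (fun (m : Qc ⟶ V) => m.app t q) hlam
    exact h
  have hsurjπ : ∀ t : FI, Function.Surjective (π₀.app t) := by
    intro t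
    haveI : Epi (π₀.app t) := inferInstance
    exact (ModuleCat.epi_iff_surjective _).1 this
  -- naturality applied to elements
  have natel : ∀ {A B : FI ⥤ ModuleCat k} (α : A ⟶ B) {t l : FI} (f : t ⟶ l) (y : A.obj t),
      α.app l (A.map f y) = B.map f (α.app t y) := by
    intro A B α t l f y
    have h := congrArg (fun (g : A.obj t ⟶ B.obj l) => g y) (α.naturality f)
    simp only [comp_apply] at h
    exact h
  -- the main induction
  have main : ∀ N : ℕ, ∀ l : FI, l.n < N → Function.Injective (Φ l) := by
    intro N
    induction N with
    | zero => exact fun l h => absurd h (Nat.not_lt_zero _)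
    | succ N ih =>
      intro l hl
      have hlN : l.n ≤ N := Nat.lt_succ_iff.1 hl
      by_cases hln : l = n
      · -- case `l = n` : retraction
        subst hln
        set ψ : (V.obj l : Type) →ₗ[k] TT k l.n (V.obj l) l.n :=
          (Submodule.span k (relSet k l.n (V.obj l) l.n)).mkQ.comp
            ((TensorProduct.mk k (FreeMod k l.n l.n) (V.obj l))
              (bas k l.n l.n (Function.Embedding.refl _))) with hψ
        have hψcls : ∀ w : V.obj l, ψ w = cls k l.n (V.obj l) l.n (Function.Embedding.refl _) w :=
          fun w => rfl
        have hretr : ψ.comp (Φ l) = LinearMap.id := by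
          apply TT_ext
          intro g w
          show ψ (Φ l (cls k l.n (V.obj l) l.n g w)) = cls k l.n (V.obj l) l.n g w
          have hbij : Function.Bijective g := (Finite.injective_iff_bijective).1 g.injective
          set σ : Equiv.Perm (Fin l.n) := Equiv.ofBijective g hbij with hσ
          have hσg : σ.toEmbedding = g := rfl
          rw [hΦ, hψcls]
          have h1 : V.map (show l ⟶ l from g) w = σ • w := by
            rw [hact σ w]; rfl
          rw [h1, ← cls_rel, hσg, trans_refl']
        intro a b hab
        have ha := LinearMap.congr_fun hretr a
        have hb := LinearMap.congr_fun hretr b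
        simp only [LinearMap.coe_comp, Function.comp_apply, LinearMap.id_coe, id_eq] at ha hb
        rw [← ha, ← hb, hab]
      · -- case `l ≠ n` : homological chase
        have IH : ∀ (t : FI), t ≠ l → (t ⟶ l) → Function.Injective (Φ t) := by
          intro t ht f
          exact ih t (lt_of_lt_of_le (FI_ne_lt ht f) hlN)
        rw [injective_iff_map_eq_zero]
        intro x hx
        -- Step A : `x` lies in `𝔪T`
        have hxm : x ∈ mSub k l T := by
          refine (Submodule.span_le (p := mSub k l T)).2 ?_ (cls_span k n.n (V.obj n) l.n x)
          rintro y ⟨g, w, rfl⟩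
          have : cls k n.n (V.obj n) l.n g w
              = T.map (show n ⟶ l from g) (cls k n.n (V.obj n) n.n (Function.Embedding.refl _) w) := by
            show _ = TTmap k n.n (V.obj n) g _
            rw [TTmap_cls, refl_trans']
          rw [this]
          exact mem_mSub k T (fun h => hln h.symm) _ _
        -- Step B : `𝔪T ≤ lam (𝔪Qc)`
        have hB : mSub k l T ≤ Submodule.map (lam.app l).hom (mSub k l Qc) := by
          refine iSup_le fun t => iSup_le fun ht => iSup_le fun f => ?_
          rintro _ ⟨y, rfl⟩
          obtain ⟨q, hq⟩ := hsurjπ t (Φ t y)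
          have hz : Φ t (y - lam.app t q) = 0 := by
            exact ((Φ t).map_sub y (lam.app t q)).trans
              ((congrArg (Φ t y - ·) ((hlam_app t q).trans hq)).trans (sub_self _))
          have hy : y = lam.app t q := by
            have h0 : Φ t (0 : T.obj t) = 0 := map_zero _
            have := IH t ht f (hz.trans h0.symm)
            exact sub_eq_zero.1 this
          refine ⟨Qc.map f q, mem_mSub k Qc ht f q, ?_⟩
          rw [hy, ← natel lam f q]
        obtain ⟨u, hu, hux⟩ := hB hxm
        -- Step C : `u` is killed by the augmentation
        have hπu : π₀.app l u = 0 := by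
          rw [← hlam_app l u, hux, hx]
        have hπu' : (P.π.f 0).app l u = 0 := by
          have hinj : Function.Injective ((Viso.hom).app l) := by
            haveI : Mono ((Viso.hom).app l) := inferInstance
            exact (ModuleCat.mono_iff_injective _).1 this
          apply hinj
          have : (Viso.hom).app l ((P.π.f 0).app l u) = π₀.app l u := by
            rfl
          rw [this, hπu, map_zero]
        -- Step D : lift `u` to `P1` using exactness of the resolution at 0
        have hexact0 : ∀ (uu : Qc.obj l), (P.π.f 0).app l uu = 0 →
            ∃ p : P1.obj l, (P.complex.d 1 0).app l p = uu := by
          have hE : ((ShortComplex.mk (P.complex.d 1 0) (P.π.f 0)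
              P.complex_d_comp_π_f_zero).map ((evaluation FI (ModuleCat k)).obj l)).Exact :=
            P.exact₀.map _
          intro uu huu
          exact (ShortComplex.moduleCat_exact_iff _).1 hE uu huu
        obtain ⟨p, hp⟩ := hexact0 u hπu'
        -- Step E : use `H₁(V) = 0`
        set F := H0 k l with hF
        set FC := (F.mapHomologicalComplex (ComplexShape.down ℕ)).obj P.complex with hFC
        have h1 : IsZero (FC.homology 1) := by
          exact IsZero.of_iso (hH1 l) (P.isoLeftDerivedObj F 1).symm
        have hex1 : FC.ExactAt 1 := (FC.exactAt_iff_isZero_homology 1).2 h1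
        have hex1' := (FC.exactAt_iff' 2 1 0 (by simp) (by simp)).1 hex1
        have hFC21 : ∀ (r : P2.obj l),
            (FC.sc' 2 1 0).f (Submodule.Quotient.mk r : (F.obj P2))
              = (Submodule.Quotient.mk ((P.complex.d 2 1).app l r) : (F.obj P1)) :=
          fun r => H0_map_mk k l (P.complex.d 2 1) r
        have hker : (FC.sc' 2 1 0).g (Submodule.Quotient.mk p : (F.obj P1)) = 0 := by
          have h2 : (FC.sc' 2 1 0).g (Submodule.Quotient.mk p : (F.obj P1))
              = (Submodule.Quotient.mk ((P.complex.d 1 0).app l p) : (F.obj Qc)) :=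
            H0_map_mk k l (P.complex.d 1 0) p
          rw [h2, hp]
          exact (Submodule.Quotient.mk_eq_zero _).2 hu
        obtain ⟨yy, hyy⟩ := (ShortComplex.moduleCat_exact_iff _).1 hex1' _ hker
        obtain ⟨r, rfl⟩ := Submodule.Quotient.mk_surjective _ yy
        rw [hFC21] at hyy
        have hm : p - (P.complex.d 2 1).app l r ∈ mSub k l P1 :=
          (Submodule.Quotient.eq _).1 hyy.symm
        -- Step F : `u = d₁ m` with `m ∈ 𝔪P1`
        set m : P1.obj l := p - (P.complex.d 2 1).app l r with hmdef
        have hdd : (P.complex.d 1 0).app l ((P.complex.d 2 1).app l r) = 0 := by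
          have h3 : (P.complex.d 2 1 ≫ P.complex.d 1 0) = 0 := P.complex.d_comp_d 2 1 0
          have h4 := congrArg (fun (g : P2 ⟶ Qc) => g.app l r) h3
          simp only [NatTrans.comp_app, comp_apply, zero_app, map_zero] at h4
          simpa using h4
        have hum : (P.complex.d 1 0).app l m = u := by
          rw [hmdef, map_sub, hp, hdd, sub_zero]
        -- Step G : everything in `lam (d₁ (𝔪P1))` vanishes by induction
        have hzero : mSub k l P1 ≤
            LinearMap.ker (((lam.app l).hom : Qc.obj l →ₗ[k] T.obj l).comp
              (((P.complex.d 1 0).app l).hom : P1.obj l →ₗ[k] Qc.obj l)) := by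
          refine iSup_le fun t => iSup_le fun ht => iSup_le fun f => ?_
          rintro _ ⟨mm, rfl⟩
          rw [LinearMap.mem_ker]
          show lam.app l ((P.complex.d 1 0).app l (P1.map f mm)) = 0
          rw [natel (P.complex.d 1 0) f mm, natel lam f]
          have hΦ0 : Φ t (lam.app t ((P.complex.d 1 0).app t mm)) = 0 := by
            rw [hlam_app]
            have h5 : (P.complex.d 1 0 ≫ π₀) = 0 := by
              show P.complex.d 1 0 ≫ P.π.f 0 ≫ Viso.hom = 0
              rw [← Category.assoc, P.complex_d_comp_π_f_zero, Limits.zero_comp]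
            have h6 := congrArg (fun (g : P1 ⟶ V) => g.app t mm) h5
            simp only [NatTrans.comp_app, comp_apply, zero_app] at h6
            simpa using h6
          have h7 : lam.app t ((P.complex.d 1 0).app t mm) = 0 := by
            have h0 : Φ t (0 : T.obj t) = 0 := map_zero _
            exact IH t ht f (hΦ0.trans h0.symm)
          rw [h7, map_zero]
        have := hzero hm
        rw [LinearMap.mem_ker] at this
        have h8 : lam.app l ((P.complex.d 1 0).app l m) = x := by rw [hum, hux]
        rw [← h8]
        exact this
  exact fun l => ⟨main (l.n + 1) l (Nat.lt_succ_self _), hgen l⟩
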